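/- arXiv:0710.2974 — 2 statements merged into one kernel-verified Lean document; each statement's English description precedes it below -/
import Mathlib

section
/- (Positivity of the ergodic constant) Let β > 0 and λ ∈ ℝ. Suppose ω ∈ C²(S) is positive in S, extends continuously to the closure of S with ω = 0 on ∂S, this extension is C¹ on the closure of S, and ω solves (E_{β,λ}) in S. Then λ > 0. -/
open Metric Set

noncomputable section

/-- The Hessian `D²v` of `v` at `x`, as a continuous linear map (the derivative of the
gradient field). -/
def hess {d : ℕ} (v : EuclideanSpace ℝ (Fin d) → ℝ) (x : EuclideanSpace ℝ (Fin d)) :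
    EuclideanSpace ℝ (Fin d) →L[ℝ] EuclideanSpace ℝ (Fin d) :=
  fderiv ℝ (gradient v) x

/-- The Laplacian `Δv = tr (D²v)`. -/
def lap {d : ℕ} (v : EuclideanSpace ℝ (Fin d) → ℝ) (x : EuclideanSpace ℝ (Fin d)) : ℝ :=
  LinearMap.trace ℝ _ (hess v x).toLinearMap

/-- The quasilinear operator `Q_β[v] = -Δv - (p-2) (D²v ∇v · ∇v)/(1+|∇v|²) + β(p-1)|∇v|²`. -/
def Qop {d : ℕ} (p β : ℝ) (v : EuclideanSpace ℝ (Fin d) → ℝ) (x : EuclideanSpace ℝ (Fin d)) : ℝ :=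
  -lap v x
    - (p - 2) * (inner ℝ (hess v x (gradient v x)) (gradient v x) : ℝ) / (1 + ‖gradient v x‖ ^ 2)
    + β * (p - 1) * ‖gradient v x‖ ^ 2

/-- `ρ(x) = dist(x, ∂S)`, the distance to the boundary of `S`. -/
def bdist {d : ℕ} (S : Set (EuclideanSpace ℝ (Fin d))) (x : EuclideanSpace ℝ (Fin d)) : ℝ :=
  Metric.infDist x (frontier S)

/-- `v` blows up at `∂S`. -/
def BlowsUp {d : ℕ} (S : Set (EuclideanSpace ℝ (Fin d))) (v : EuclideanSpace ℝ (Fin d) → ℝ) :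
    Prop :=
  ∀ K : ℝ, ∃ δ > 0, ∀ x ∈ S, bdist S x < δ → v x > K

/-- Smooth-domain assumption: for some `δ₀ > 0` the boundary distance `ρ` is `C²` with
`|∇ρ| = 1` on the collar `{x ∈ S : ρ(x) < δ₀}`. -/
def SmoothCollar {d : ℕ} (S : Set (EuclideanSpace ℝ (Fin d))) : Prop :=
  ∃ δ₀ > 0,
    ContDiffOn ℝ 2 (bdist S) {x ∈ S | bdist S x < δ₀} ∧
      ∀ x ∈ S, bdist S x < δ₀ → ‖gradient (bdist S) x‖ = 1

/-- Divergence of a vector field: `div F = ∑ i, ∂F_i/∂x_i`. -/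
def dvg {d : ℕ} (F : EuclideanSpace ℝ (Fin d) → EuclideanSpace ℝ (Fin d))
    (x : EuclideanSpace ℝ (Fin d)) : ℝ :=
  ∑ i : Fin d, fderiv ℝ (fun y => F y i) x (EuclideanSpace.single i 1)

/-- `ω` solves `(E_{β,λ})`: the field `(β²ω² + |∇ω|²)^{p/2-1} ∇ω` is `C¹` on `S` and
`-div((β²ω² + |∇ω|²)^{p/2-1} ∇ω) = βλ (β²ω² + |∇ω|²)^{p/2-1} ω` in `S`. -/
def SolvesE {d : ℕ} (p β lam : ℝ) (S : Set (EuclideanSpace ℝ (Fin d)))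
    (ω : EuclideanSpace ℝ (Fin d) → ℝ) : Prop :=
  ContDiffOn ℝ 1
      (fun y => (β ^ 2 * ω y ^ 2 + ‖gradient ω y‖ ^ 2) ^ (p / 2 - 1) • gradient ω y) S ∧
    ∀ x ∈ S,
      -dvg (fun y => (β ^ 2 * ω y ^ 2 + ‖gradient ω y‖ ^ 2) ^ (p / 2 - 1) • gradient ω y) x =
        β * lam * (β ^ 2 * ω x ^ 2 + ‖gradient ω x‖ ^ 2) ^ (p / 2 - 1) * ω x

open Filter Topology InnerProductSpace in
/-- Second derivative test: at an interior local max, the second derivative is `≤ 0`. -/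
lemma second_deriv_nonpos {f : ℝ → ℝ}
    (hf : ∀ᶠ t in 𝓝 (0:ℝ), DifferentiableAt ℝ f t)
    (hf2 : DifferentiableAt ℝ (deriv f) 0)
    (hmax : IsLocalMax f 0) : deriv (deriv f) 0 ≤ 0 := by
  by_contra hc
  push_neg at hc
  set c := deriv (deriv f) 0 with hcdef
  have hd0 : deriv f 0 = 0 := hmax.deriv_eq_zero
  have hslope : Tendsto (fun t => deriv f t / t) (𝓝[≠] (0:ℝ)) (𝓝 c) := by
    have := hf2.hasDerivAt
    rw [hasDerivAt_iff_tendsto_slope] at this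
    refine this.congr' ?_
    filter_upwards [self_mem_nhdsWithin] with t ht
    simp [slope, hd0, div_eq_inv_mul]
  have hev : ∀ᶠ t in 𝓝[≠] (0:ℝ), c/2 < deriv f t / t :=
    hslope.eventually (eventually_gt_nhds (by linarith))
  obtain ⟨r, hr, hball⟩ := Metric.eventually_nhds_iff.mp
    (hf.and (hmax.filter_mono (le_refl _)) : ∀ᶠ t in 𝓝 (0:ℝ), DifferentiableAt ℝ f t ∧ f t ≤ f 0)
  rw [eventually_nhdsWithin_iff] at hev
  obtain ⟨r', hr', hball'⟩ := Metric.eventually_nhds_iff.mp hev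
  set R := min r r' with hR
  have hR0 : 0 < R := lt_min hr hr'
  have hpos : ∀ t ∈ Ioo (0:ℝ) R, 0 < deriv f t := by
    intro t ht
    have h1 : dist t (0:ℝ) < r' := by
      simp only [Real.dist_eq, sub_zero]
      rw [abs_of_pos ht.1]; exact lt_of_lt_of_le ht.2 (min_le_right _ _)
    have h2 : c/2 < deriv f t / t := hball' h1 (by simpa using ne_of_gt ht.1)
    have hc2 : (0:ℝ) < c/2 := by linarith
    have h3 : 0 < deriv f t / t := lt_trans hc2 h2
    rcases div_pos_iff.mp h3 with ⟨h, _⟩ | ⟨_, h⟩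
    · exact h
    · exact absurd ht.1 (not_lt.mpr h.le)
  have hmono : StrictMonoOn f (Icc 0 (R/2)) := by
    apply strictMonoOn_of_deriv_pos (convex_Icc _ _)
    · intro t ht
      have hd : dist t (0:ℝ) < r := by
        simp only [Real.dist_eq, sub_zero]
        rw [abs_of_nonneg ht.1]
        calc t ≤ R/2 := ht.2
        _ < R := by linarith
        _ ≤ r := min_le_left _ _
      exact (hball hd).1.continuousAt.continuousWithinAt
    · intro t ht
      rw [interior_Icc] at ht
      exact hpos t ⟨ht.1, by linarith [ht.2]⟩
  have h04 : (R/4 : ℝ) ∈ Icc (0:ℝ) (R/2) := ⟨by linarith, by linarith⟩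
  have h00 : (0:ℝ) ∈ Icc (0:ℝ) (R/2) := ⟨le_refl _, by linarith⟩
  have hlt : f 0 < f (R/4) := hmono h00 h04 (by linarith)
  have hle : f (R/4) ≤ f 0 := by
    refine (hball ?_).2
    simp only [Real.dist_eq, sub_zero]
    rw [abs_of_pos (by linarith : (0:ℝ) < R/4)]
    calc R/4 < R := by linarith
    _ ≤ r := min_le_left _ _
  linarith

open InnerProductSpace in
/-- Coordinates of the gradient are directional derivatives. -/
lemma grad_apply {d : ℕ} (f : EuclideanSpace ℝ (Fin d) → ℝ) (x : EuclideanSpace ℝ (Fin d))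
    (i : Fin d) : gradient f x i = fderiv ℝ f x (EuclideanSpace.single i 1) := by
  have h1 : (inner ℝ (gradient f x) (EuclideanSpace.single i (1:ℝ)) : ℝ)
      = fderiv ℝ f x (EuclideanSpace.single i 1) := by
    unfold gradient
    exact toDual_symm_apply
  rw [← h1, real_inner_comm, EuclideanSpace.inner_single_left]
  simp

lemma exp_coord_hasFDerivAt {d : ℕ} (i0 : Fin d) (γ ε : ℝ) (x : EuclideanSpace ℝ (Fin d)) :
    HasFDerivAt (fun y : EuclideanSpace ℝ (Fin d) => ε * Real.exp (γ * y i0))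
      ((ε * γ * Real.exp (γ * x i0)) •
        (EuclideanSpace.proj i0 : EuclideanSpace ℝ (Fin d) →L[ℝ] ℝ)) x := by
  have h1 : HasFDerivAt (fun y : EuclideanSpace ℝ (Fin d) => y i0)
      (EuclideanSpace.proj i0 : EuclideanSpace ℝ (Fin d) →L[ℝ] ℝ) x := by
    have := (EuclideanSpace.proj i0 :
        EuclideanSpace ℝ (Fin d) →L[ℝ] ℝ).hasFDerivAt (x := x)
    convert this using 2
    rfl
  have h2 := (Real.hasDerivAt_exp (γ * x i0)).comp_hasFDerivAt x (h1.const_mul γ)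
  have h3 := h2.const_mul ε
  refine h3.congr_fderiv ?_
  ext v
  simp [ContinuousLinearMap.smul_apply]
  ring

/-- At a local max of `ω + ε exp(γ x_{i0})`, the derivative of `ω` is determined. -/
lemma fderiv_at_pert_max {d : ℕ} {ω : EuclideanSpace ℝ (Fin d) → ℝ}
    {y : EuclideanSpace ℝ (Fin d)} (hωd : DifferentiableAt ℝ ω y) {ε γ : ℝ} (i0 : Fin d)
    (hmax : IsLocalMax (fun z => ω z + ε * Real.exp (γ * z i0)) y) (v : EuclideanSpace ℝ (Fin d)) :
    fderiv ℝ ω y v = -(ε * γ * Real.exp (γ * y i0)) * v i0 := by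
  have hexp := exp_coord_hasFDerivAt i0 γ ε y
  have hψ : HasFDerivAt (fun z => ω z + ε * Real.exp (γ * z i0))
      (fderiv ℝ ω y + (ε * γ * Real.exp (γ * y i0)) •
        (EuclideanSpace.proj i0 : EuclideanSpace ℝ (Fin d) →L[ℝ] ℝ)) y :=
    hωd.hasFDerivAt.add hexp
  have h0 : fderiv ℝ (fun z => ω z + ε * Real.exp (γ * z i0)) y = 0 := hmax.fderiv_eq_zero
  rw [hψ.fderiv] at h0
  have := congrArg (fun L : EuclideanSpace ℝ (Fin d) →L[ℝ] ℝ => L v) h0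
  simp only [ContinuousLinearMap.add_apply, ContinuousLinearMap.smul_apply,
    ContinuousLinearMap.zero_apply, smul_eq_mul] at this
  have hproj : (EuclideanSpace.proj i0 : EuclideanSpace ℝ (Fin d) →L[ℝ] ℝ) v = v i0 := rfl
  rw [hproj] at this
  linarith

open Filter Topology in
/-- Directional second derivative test at a local max of the perturbed function. -/
lemma dir_second_deriv {d : ℕ} {S : Set (EuclideanSpace ℝ (Fin d))} (hSo : IsOpen S)
    {ω : EuclideanSpace ℝ (Fin d) → ℝ} (hω2 : ContDiffOn ℝ 2 ω S)
    {y : EuclideanSpace ℝ (Fin d)} (hy : y ∈ S) {ε γ : ℝ} (i0 i : Fin d)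
    (hmax : IsLocalMax (fun z => ω z + ε * Real.exp (γ * z i0)) y) :
    fderiv ℝ (fun z => fderiv ℝ ω z (EuclideanSpace.single i 1)) y (EuclideanSpace.single i 1)
      + ε * γ ^ 2 * ((EuclideanSpace.single i (1:ℝ)) i0) ^ 2 * Real.exp (γ * y i0) ≤ 0 := by
  set e : EuclideanSpace ℝ (Fin d) := EuclideanSpace.single i 1 with he
  set δ : ℝ := e i0 with hδ
  set G : EuclideanSpace ℝ (Fin d) → ℝ := fun z => fderiv ℝ ω z e with hG
  set ℓ : ℝ → EuclideanSpace ℝ (Fin d) := fun t => y + t • e with hℓdef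
  obtain ⟨r, hr, hball⟩ := Metric.isOpen_iff.mp hSo y hy
  have hℓ : ∀ t : ℝ, HasDerivAt ℓ e t := fun t => by
    simpa [hℓdef] using ((hasDerivAt_id t).smul_const e).const_add y
  have hℓ0 : ℓ 0 = y := by simp [hℓdef]
  have hℓmem : ∀ t : ℝ, |t| < r → ℓ t ∈ S := by
    intro t ht
    apply hball
    simp only [mem_ball, hℓdef]
    have : dist (y + t • e) y = ‖t • e‖ := by
      rw [dist_eq_norm]; congr 1; abel
    rw [this, norm_smul, he, EuclideanSpace.norm_single]
    simpa using ht
  have hℓcoord : ∀ t : ℝ, (ℓ t) i0 = y i0 + t * δ := by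
    intro t
    simp [hℓdef, hδ, PiLp.add_apply, PiLp.smul_apply, smul_eq_mul]
  have hωdiff : ∀ z ∈ S, DifferentiableAt ℝ ω z := fun z hz =>
    (hω2.contDiffAt (hSo.mem_nhds hz)).differentiableAt (by norm_num)
  have hGC1 : ContDiffOn ℝ 1 G S :=
    (hω2.fderiv_of_isOpen hSo (by norm_num)).clm_apply contDiffOn_const
  have hGdiff : DifferentiableAt ℝ G y :=
    (hGC1.contDiffAt (hSo.mem_nhds hy)).differentiableAt (by norm_num)
  set φ : ℝ → ℝ := fun t => ω (ℓ t) + ε * Real.exp (γ * (y i0 + t * δ)) with hφdef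
  set w : ℝ → ℝ := fun t => G (ℓ t) + ε * γ * δ * Real.exp (γ * (y i0 + t * δ)) with hwdef
  have hφmax : IsLocalMax φ 0 := by
    have hc : ContinuousAt ℓ 0 := (hℓ 0).continuousAt
    have hmax' : IsLocalMax (fun z => ω z + ε * Real.exp (γ * z i0)) (ℓ 0) := by rwa [hℓ0]
    have := hmax'.comp_continuous hc
    refine this.congr ?_
    filter_upwards with t
    simp only [Function.comp_apply, hφdef, hℓcoord t]
  have hexp_inner : ∀ t : ℝ, HasDerivAt (fun s : ℝ => γ * (y i0 + s * δ)) (γ * δ) t := by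
    intro t
    have := (((hasDerivAt_id t).mul_const δ).const_add (y i0)).const_mul γ
    simpa using this
  have hexp' : ∀ t : ℝ, HasDerivAt (fun s : ℝ => ε * Real.exp (γ * (y i0 + s * δ)))
      (ε * (Real.exp (γ * (y i0 + t * δ)) * (γ * δ))) t := by
    intro t
    exact ((Real.hasDerivAt_exp _).comp t (hexp_inner t)).const_mul ε
  have hφ' : ∀ t : ℝ, |t| < r → HasDerivAt φ (w t) t := by
    intro t ht
    have h1 : HasDerivAt (fun s => ω (ℓ s)) (fderiv ℝ ω (ℓ t) e) t :=
      ((hωdiff (ℓ t) (hℓmem t ht)).hasFDerivAt).comp_hasDerivAt t (hℓ t)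
    have := h1.fun_add (hexp' t)
    refine this.congr_deriv ?_
    simp only [hwdef, hG]
    ring
  have hball0 : ∀ᶠ t : ℝ in 𝓝 0, |t| < r := by
    have : Metric.ball (0:ℝ) r ∈ 𝓝 (0:ℝ) := Metric.ball_mem_nhds 0 hr
    filter_upwards [this] with t ht
    simpa [Real.dist_eq] using ht
  have hdiff_ev : ∀ᶠ t in 𝓝 (0:ℝ), DifferentiableAt ℝ φ t := by
    filter_upwards [hball0] with t ht using (hφ' t ht).differentiableAt
  have hderiv_ev : deriv φ =ᶠ[𝓝 (0:ℝ)] w := by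
    filter_upwards [hball0] with t ht using (hφ' t ht).deriv
  have hw : HasDerivAt w
      (fderiv ℝ G y e + ε * γ * δ * (Real.exp (γ * (y i0 + 0 * δ)) * (γ * δ))) 0 := by
    have h1 : HasDerivAt (fun s => G (ℓ s)) (fderiv ℝ G (ℓ 0) e) 0 :=
      (by rw [hℓ0]; exact hGdiff.hasFDerivAt : HasFDerivAt G (fderiv ℝ G (ℓ 0)) (ℓ 0)
        ).comp_hasDerivAt 0 (hℓ 0)
    rw [hℓ0] at h1
    have h2 := ((Real.hasDerivAt_exp _).comp 0 (hexp_inner 0)).const_mul (ε * γ * δ)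
    exact h1.add h2
  have hwdiff : DifferentiableAt ℝ w 0 := hw.differentiableAt
  have hf2 : DifferentiableAt ℝ (deriv φ) 0 :=
    (hderiv_ev.differentiableAt_iff).mpr hwdiff
  have hkey := second_deriv_nonpos hdiff_ev hf2 hφmax
  have heq1 : deriv (deriv φ) 0 = deriv w 0 := hderiv_ev.deriv_eq
  rw [heq1, hw.deriv] at hkey
  have : fderiv ℝ G y e + ε * γ ^ 2 * δ ^ 2 * Real.exp (γ * y i0) ≤ 0 := by
    rw [show γ * (y i0 + 0 * δ) = γ * y i0 by ring] at hkey
    nlinarith [hkey]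
  exact this


set_option maxHeartbeats 1000000 in
/-- (Positivity of the ergodic constant) If `ω ∈ C²(S)` is positive in `S`, is `C¹` up to the
closure of `S`, vanishes on `∂S`, and solves `(E_{β,λ})` in `S`, then `λ > 0`. -/
theorem stmt3 (d : ℕ) (hd : 2 ≤ d) (p : ℝ) (hp : 1 < p)
    (S : Set (EuclideanSpace ℝ (Fin d))) (hSo : IsOpen S) (hSb : Bornology.IsBounded S)
    (hSc : IsConnected S) (hSm : SmoothCollar S) (β lam : ℝ) (hβ : 0 < β)
    (ω : EuclideanSpace ℝ (Fin d) → ℝ)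
    (hω2 : ContDiffOn ℝ 2 ω S) (hωpos : ∀ x ∈ S, 0 < ω x)
    (hω1 : ContDiffOn ℝ 1 ω (closure S)) (hω0 : ∀ x ∈ frontier S, ω x = 0)
    (hsol : SolvesE p β lam S ω) :
    0 < lam := by
  by_contra hcon
  push_neg at hcon
  obtain ⟨-, heq⟩ := hsol
  have hd0 : 0 < d := by omega
  set i0 : Fin d := ⟨0, hd0⟩ with hi0
  set a : EuclideanSpace ℝ (Fin d) → ℝ :=
    fun y => (β ^ 2 * ω y ^ 2 + ‖gradient ω y‖ ^ 2) ^ (p / 2 - 1) with hadef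
  have hbase : ∀ x ∈ S, 0 < β ^ 2 * ω x ^ 2 + ‖gradient ω x‖ ^ 2 := by
    intro x hx; have := hωpos x hx; positivity
  have hapos : ∀ x ∈ S, 0 < a x := by
    intro x hx
    simp only [hadef]
    exact Real.rpow_pos_of_pos (hbase x hx) _
  have hgC1 : ContDiffOn ℝ 1 (gradient ω) S := by
    have h1 : ContDiffOn ℝ 1 (fderiv ℝ ω) S := hω2.fderiv_of_isOpen hSo (by norm_num)
    exact ((InnerProductSpace.toDual ℝ
      (EuclideanSpace ℝ (Fin d))).symm.contDiff (n := 1)).comp_contDiffOn h1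
  have haC1 : ContDiffOn ℝ 1 a S := by
    have hb : ContDiffOn ℝ 1 (fun y => β ^ 2 * ω y ^ 2 + ‖gradient ω y‖ ^ 2) S :=
      (contDiffOn_const.mul ((hω2.of_le (by norm_num)).pow 2)).add (hgC1.norm_sq ℝ)
    rw [hadef]
    exact hb.rpow_const_of_ne (fun x hx => ne_of_gt (hbase x hx))
  -- max of ω over the closure
  have hclcpt : IsCompact (closure S) := hSb.isCompact_closure
  have hclne : (closure S).Nonempty := hSc.nonempty.closure
  obtain ⟨x₀, hx₀cl, hx₀max⟩ := hclcpt.exists_isMaxOn hclne hω1.continuousOn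
  obtain ⟨z, hz⟩ := hSc.nonempty
  have hM : 0 < ω x₀ :=
    lt_of_lt_of_le (hωpos z hz) (isMaxOn_iff.mp hx₀max z (subset_closure hz))
  set M := ω x₀ with hMdef
  have hfrS : ∀ x, x ∈ closure S → x ∉ S → x ∈ frontier S := by
    intro x hxc hxs
    rw [frontier, hSo.interior_eq]; exact ⟨hxc, hxs⟩
  have hx₀S : x₀ ∈ S := by
    by_contra hxs
    have h0 : ω x₀ = 0 := hω0 x₀ (hfrS _ hx₀cl hxs)
    rw [hMdef] at hM; rw [h0] at hM; exact lt_irrefl 0 hM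
  -- the region U and its compact closure K
  set U : Set (EuclideanSpace ℝ (Fin d)) := S ∩ ω ⁻¹' (Ioi (M/2)) with hUdef
  have hUo : IsOpen U := (hω2.continuousOn).isOpen_inter_preimage hSo isOpen_Ioi
  have hx₀U : x₀ ∈ U := by
    refine ⟨hx₀S, ?_⟩
    simp only [mem_preimage, mem_Ioi, ← hMdef]
    linarith
  set K := closure U with hKdef
  have hKcl : K ⊆ closure S := closure_mono inter_subset_left
  have hKcpt : IsCompact K := hclcpt.of_isClosed_subset isClosed_closure hKcl
  have hKge : ∀ x ∈ K, M/2 ≤ ω x := by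
    intro x hx
    have hCc : IsClosed (closure S ∩ ω ⁻¹' (Ici (M/2))) :=
      hω1.continuousOn.preimage_isClosed_of_isClosed isClosed_closure isClosed_Ici
    have hsub : U ⊆ closure S ∩ ω ⁻¹' (Ici (M/2)) := by
      intro u hu
      refine ⟨subset_closure hu.1, ?_⟩
      have h2 : M/2 < ω u := hu.2
      exact le_of_lt h2
    exact (closure_minimal hsub hCc hx).2
  have hKS : K ⊆ S := by
    intro x hx
    by_contra hxs
    have h0 := hω0 x (hfrS _ (hKcl hx) hxs)
    have hge := hKge x hx; rw [h0] at hge; linarith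
  have hKne : K.Nonempty := ⟨x₀, subset_closure hx₀U⟩
  -- min of a on K
  obtain ⟨xa, hxa, hxamin⟩ := hKcpt.exists_isMinOn hKne ((haC1.continuousOn).mono hKS)
  set a₀ := a xa with ha₀def
  have ha₀ : 0 < a₀ := hapos xa (hKS hxa)
  -- uniform bound on the directional derivative of a
  have hAcont : ContinuousOn (fun x => fderiv ℝ a x (EuclideanSpace.single i0 1)) S :=
    (haC1.continuousOn_fderiv_of_isOpen hSo le_rfl).clm_apply continuousOn_const
  obtain ⟨B, hB⟩ := hKcpt.exists_bound_of_continuousOn (hAcont.mono hKS)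
  have hB0 : 0 ≤ B := le_trans (norm_nonneg _) (hB xa hxa)
  set γ := (B + 1) / a₀ with hγdef
  have hγ : 0 < γ := div_pos (by linarith) ha₀
  have hkeyγ : ∀ x ∈ K, 1 ≤ γ * a x + fderiv ℝ a x (EuclideanSpace.single i0 1) := by
    intro x hx
    have h1 : a₀ ≤ a x := isMinOn_iff.mp hxamin x hx
    have h2 : γ * a₀ = B + 1 := by
      rw [hγdef]; field_simp
    have h3 : |fderiv ℝ a x (EuclideanSpace.single i0 1)| ≤ B := by
      rw [← Real.norm_eq_abs]; exact hB x hx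
    have h4 : γ * a₀ ≤ γ * a x := by nlinarith
    have h5 := (abs_le.mp h3).1
    linarith
  -- bound on the exponential weight on K
  have hcoord : Continuous (fun x : EuclideanSpace ℝ (Fin d) => x i0) := by
    have h := (EuclideanSpace.proj i0 : EuclideanSpace ℝ (Fin d) →L[ℝ] ℝ).continuous
    have heqc : (fun x : EuclideanSpace ℝ (Fin d) => x i0)
        = ⇑(EuclideanSpace.proj i0 : EuclideanSpace ℝ (Fin d) →L[ℝ] ℝ) := by
      funext x; rfl
    rw [heqc]; exact h
  have hexpc : Continuous (fun x : EuclideanSpace ℝ (Fin d) => Real.exp (γ * x i0)) :=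
    Real.continuous_exp.comp (continuous_const.mul hcoord)
  obtain ⟨C, hC⟩ := hKcpt.exists_bound_of_continuousOn hexpc.continuousOn
  have hCe : ∀ x ∈ K, Real.exp (γ * x i0) ≤ C := by
    intro x hx; have := hC x hx
    rwa [Real.norm_eq_abs, abs_of_pos (Real.exp_pos _)] at this
  have hC0 : 0 < C := lt_of_lt_of_le (Real.exp_pos _) (hCe x₀ (subset_closure hx₀U))
  set ε := M / (4 * C) with hεdef
  have hε : 0 < ε := by rw [hεdef]; positivity
  -- the perturbed function, its max over K is attained in U
  set ψ : EuclideanSpace ℝ (Fin d) → ℝ := fun w => ω w + ε * Real.exp (γ * w i0) with hψdef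
  have hψcont : ContinuousOn ψ S := (hω2.continuousOn).add ((continuous_const.mul hexpc).continuousOn)
  obtain ⟨y, hyK, hymax⟩ := hKcpt.exists_isMaxOn hKne (hψcont.mono hKS)
  have hyU : y ∈ U := by
    by_contra hyU
    have hyS : y ∈ S := hKS hyK
    have hωy : ω y ≤ M/2 := by
      by_contra hgt; push_neg at hgt
      exact hyU ⟨hyS, hgt⟩
    have hb1 : ε * Real.exp (γ * y i0) ≤ ε * C := by
      have := hCe y hyK
      nlinarith
    have h1 : ψ y ≤ M/2 + ε * C := by
      simp only [hψdef]; linarith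
    have h2 : ε * C = M / 4 := by
      rw [hεdef]; field_simp
    have h3 : ψ x₀ ≤ ψ y := isMaxOn_iff.mp hymax x₀ (subset_closure hx₀U)
    have h4 : M < ψ x₀ := by
      simp only [hψdef]
      rw [hMdef]
      nlinarith [Real.exp_pos (γ * x₀ i0)]
    clear_value M ε ψ
    linarith
  have hyS : y ∈ S := hyU.1
  have hloc : IsLocalMax ψ y :=
    hymax.isLocalMax (Filter.mem_of_superset (hUo.mem_nhds hyU) subset_closure)
  set H := Real.exp (γ * y i0) with hHdef
  have hH : 0 < H := Real.exp_pos _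
  -- differentiability at y
  have hωdy : DifferentiableAt ℝ ω y :=
    (hω2.contDiffAt (hSo.mem_nhds hyS)).differentiableAt (by norm_num)
  have hady : DifferentiableAt ℝ a y :=
    (haC1.contDiffAt (hSo.mem_nhds hyS)).differentiableAt (by norm_num)
  have hGdy : ∀ i : Fin d,
      DifferentiableAt ℝ (fun w => fderiv ℝ ω w (EuclideanSpace.single i 1)) y := by
    intro i
    have hx : ContDiffOn ℝ 1 (fun w => fderiv ℝ ω w (EuclideanSpace.single i 1)) S :=
      (hω2.fderiv_of_isOpen hSo (by norm_num)).clm_apply contDiffOn_const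
    exact (hx.contDiffAt (hSo.mem_nhds hyS)).differentiableAt (by norm_num)
  -- first-order information at y
  have hgval : ∀ i : Fin d, fderiv ℝ ω y (EuclideanSpace.single i 1)
      = -(ε * γ * H) * (EuclideanSpace.single i (1:ℝ)) i0 := by
    intro i
    exact fderiv_at_pert_max hωdy i0 hloc _
  -- second-order information at y
  have hsdd : ∀ i : Fin d,
      fderiv ℝ (fun w => fderiv ℝ ω w (EuclideanSpace.single i 1)) y (EuclideanSpace.single i 1)
        + ε * γ ^ 2 * ((EuclideanSpace.single i (1:ℝ)) i0) ^ 2 * H ≤ 0 := by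
    intro i
    exact dir_second_deriv hSo hω2 hyS i0 i hloc
  -- the divergence of the field, term by term
  have hterm : ∀ i : Fin d,
      fderiv ℝ (fun w => ((β ^ 2 * ω w ^ 2 + ‖gradient ω w‖ ^ 2) ^ (p / 2 - 1) •
          gradient ω w : EuclideanSpace ℝ (Fin d)) i) y (EuclideanSpace.single i 1)
        = a y * fderiv ℝ (fun w => fderiv ℝ ω w (EuclideanSpace.single i 1)) y
            (EuclideanSpace.single i 1)
          + fderiv ℝ ω y (EuclideanSpace.single i 1) *
              fderiv ℝ a y (EuclideanSpace.single i 1) := by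
    intro i
    have hfun : (fun w => ((β ^ 2 * ω w ^ 2 + ‖gradient ω w‖ ^ 2) ^ (p / 2 - 1) •
          gradient ω w : EuclideanSpace ℝ (Fin d)) i)
        = fun w => a w * fderiv ℝ ω w (EuclideanSpace.single i 1) := by
      funext w
      simp only [PiLp.smul_apply, smul_eq_mul, grad_apply]
      rfl
    rw [hfun, fderiv_fun_mul hady (hGdy i)]
    simp only [ContinuousLinearMap.add_apply, ContinuousLinearMap.smul_apply, smul_eq_mul]
  have hdvg_eq : dvg (fun w => (β ^ 2 * ω w ^ 2 + ‖gradient ω w‖ ^ 2) ^ (p / 2 - 1) •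
      gradient ω w) y
      = ∑ i : Fin d,
          (a y * fderiv ℝ (fun w => fderiv ℝ ω w (EuclideanSpace.single i 1)) y
            (EuclideanSpace.single i 1)
          + fderiv ℝ ω y (EuclideanSpace.single i 1) *
              fderiv ℝ a y (EuclideanSpace.single i 1)) := by
    unfold dvg
    exact Finset.sum_congr rfl (fun i _ => hterm i)
  have hay : 0 < a y := hapos y hyS
  -- bound each summand
  have hbound : ∀ i : Fin d,
      a y * fderiv ℝ (fun w => fderiv ℝ ω w (EuclideanSpace.single i 1)) y
          (EuclideanSpace.single i 1)
        + fderiv ℝ ω y (EuclideanSpace.single i 1) *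
            fderiv ℝ a y (EuclideanSpace.single i 1)
      ≤ if i = i0 then
          -(ε * γ * H) * (γ * a y + fderiv ℝ a y (EuclideanSpace.single i0 1)) else 0 := by
    intro i
    have hs := hsdd i
    have hg := hgval i
    by_cases hii : i = i0
    · rw [hii] at hs hg ⊢
      have hδ : (EuclideanSpace.single i0 (1:ℝ)) i0 = 1 := by
        rw [EuclideanSpace.single_apply]; simp
      rw [hδ] at hs hg
      rw [one_pow, mul_one] at hs
      rw [if_pos rfl, hg]
      have hDab : fderiv ℝ
          (fun w => fderiv ℝ ω w (EuclideanSpace.single i0 1)) y (EuclideanSpace.single i0 1)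
          ≤ -(ε * γ ^ 2 * H) := by clear_value i0 a γ ε H; linarith
      have hint := mul_le_mul_of_nonneg_left hDab hay.le
      clear_value i0 a γ ε H
      nlinarith [hint]
    · have hδ : (EuclideanSpace.single i (1:ℝ)) i0 = 0 := by
        rw [EuclideanSpace.single_apply]
        simp [Ne.symm hii]
      rw [hδ] at hs hg
      norm_num at hs hg
      rw [if_neg hii, hg]
      have hint := mul_le_mul_of_nonneg_left hs hay.le
      clear_value i0 a γ ε H
      nlinarith [hint]
  have hifsum : (∑ i : Fin d, (if i = i0 then
        -(ε * γ * H) * (γ * a y + fderiv ℝ a y (EuclideanSpace.single i0 1)) else 0))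
      = -(ε * γ * H) * (γ * a y + fderiv ℝ a y (EuclideanSpace.single i0 1)) := by
    rw [Finset.sum_ite_eq' Finset.univ i0 (fun _ =>
      -(ε * γ * H) * (γ * a y + fderiv ℝ a y (EuclideanSpace.single i0 1)))]
    simp
  have hsum_le : dvg (fun w => (β ^ 2 * ω w ^ 2 + ‖gradient ω w‖ ^ 2) ^ (p / 2 - 1) •
      gradient ω w) y
      ≤ -(ε * γ * H) * (γ * a y + fderiv ℝ a y (EuclideanSpace.single i0 1)) := by
    rw [hdvg_eq, ← hifsum]
    exact Finset.sum_le_sum (fun i _ => hbound i)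
  have hklt := hkeyγ y hyK
  have hX : 0 < ε * γ * H := mul_pos (mul_pos hε hγ) hH
  have hneg : dvg (fun w => (β ^ 2 * ω w ^ 2 + ‖gradient ω w‖ ^ 2) ^ (p / 2 - 1) •
      gradient ω w) y < 0 := by
    have hmul := mul_le_mul_of_nonneg_left hklt (le_of_lt hX)
    clear_value i0 a γ ε H
    nlinarith [hsum_le, hmul, hX]
  -- but the equation forces the divergence to be nonnegative at y
  have heqy : -dvg (fun w => (β ^ 2 * ω w ^ 2 + ‖gradient ω w‖ ^ 2) ^ (p / 2 - 1) •
      gradient ω w) y = β * lam * a y * ω y := heq y hyS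
  have hωy := hωpos y hyS
  have hrhs : β * lam * a y * ω y ≤ 0 := by
    have h5 : lam * (β * a y * ω y) ≤ 0 :=
      mul_nonpos_iff.mpr (Or.inr ⟨hcon, le_of_lt (mul_pos (mul_pos hβ hay) hωy)⟩)
    clear_value a
    nlinarith [h5]
  clear_value i0 a M U K a₀ γ ε ψ H
  linarith [heqy, hrhs, hneg]
end
end

section
/- (Proposition 2.3, blow-up of the ergodic constant as β → 0⁺) For every K > 0 there exists β̄ > 0 such that: whenever 0 < β < β̄, λ ∈ ℝ, and v ∈ C²(S) satisfies Q_β[v] = -λ at every point of S with v blowing up at ∂S, then λ ≥ K. -/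
open Metric Set

noncomputable section

section Helpers

open Filter InnerProductSpace

variable {d : ℕ}

local notation "E" => EuclideanSpace ℝ (Fin d)

lemma my_trace_eq_sum_inner (b : OrthonormalBasis (Fin d) ℝ E) (T : E →ₗ[ℝ] E) :
    LinearMap.trace ℝ E T = ∑ i, (inner ℝ (b i) (T (b i)) : ℝ) := by
  classical
  rw [LinearMap.trace_eq_matrix_trace ℝ b.toBasis, Matrix.trace]
  refine Finset.sum_congr rfl fun i _ => ?_
  simp [Matrix.diag_apply, LinearMap.toMatrix_apply,
    OrthonormalBasis.coe_toBasis_repr_apply, OrthonormalBasis.repr_apply_apply,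
    OrthonormalBasis.coe_toBasis]

lemma my_trace_nonneg (T : E →L[ℝ] E) (h : ∀ u : E, 0 ≤ (inner ℝ u (T u) : ℝ)) :
    0 ≤ LinearMap.trace ℝ E T.toLinearMap := by
  rw [my_trace_eq_sum_inner (EuclideanSpace.basisFun (Fin d) ℝ)]
  exact Finset.sum_nonneg fun i _ => h _

lemma my_inner_le_trace (hd : 0 < d) (T : E →L[ℝ] E) (h : ∀ u : E, 0 ≤ (inner ℝ u (T u) : ℝ))
    (g : E) : (inner ℝ g (T g) : ℝ) ≤ ‖g‖ ^ 2 * LinearMap.trace ℝ E T.toLinearMap := by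
  rcases eq_or_ne g 0 with rfl | hg
  · simp
  · have hgn : (0:ℝ) < ‖g‖ := norm_pos_iff.mpr hg
    set u : E := ‖g‖⁻¹ • g with hu_def
    have hu : ‖u‖ = 1 := by
      rw [hu_def, norm_smul, norm_inv, norm_norm, inv_mul_cancel₀ hgn.ne']
    have hortho : Orthonormal ℝ (({(⟨0, hd⟩ : Fin d)} : Set (Fin d)).restrict
        (fun _ : Fin d => u)) := by
      constructor
      · intro i; exact hu
      · intro i j hij
        exact absurd (Subtype.ext ((Set.mem_singleton_iff.mp i.2).trans
          (Set.mem_singleton_iff.mp j.2).symm)) hij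
    obtain ⟨b, hb⟩ := hortho.exists_orthonormalBasis_extension_of_card_eq
      (by simp [finrank_euclideanSpace])
    have hb0 : b ⟨0, hd⟩ = u := hb _ rfl
    have h1 : (inner ℝ u (T u) : ℝ) ≤ LinearMap.trace ℝ E T.toLinearMap := by
      rw [my_trace_eq_sum_inner b]
      have := Finset.single_le_sum (f := fun i => (inner ℝ (b i) (T (b i)) : ℝ))
        (fun i _ => h _) (Finset.mem_univ (⟨0, hd⟩ : Fin d))
      simpa [hb0] using this
    have hgu : g = ‖g‖ • u := by
      rw [hu_def, smul_smul, mul_inv_cancel₀ hgn.ne', one_smul]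
    calc (inner ℝ g (T g) : ℝ) = ‖g‖ ^ 2 * (inner ℝ u (T u) : ℝ) := by
          conv_lhs => rw [hgu]
          rw [map_smul, real_inner_smul_left, real_inner_smul_right]
          ring
      _ ≤ ‖g‖ ^ 2 * LinearMap.trace ℝ E T.toLinearMap :=
          mul_le_mul_of_nonneg_left h1 (sq_nonneg _)

lemma my_second_deriv_test {f f' : ℝ → ℝ} {a : ℝ}
    (hmin : IsLocalMin f 0) (hf : ∀ᶠ t in nhds (0:ℝ), HasDerivAt f (f' t) t)
    (hf' : HasDerivAt f' a 0) : 0 ≤ a := by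
  by_contra hlt
  push_neg at hlt
  have h0 : f' 0 = 0 := hmin.hasDerivAt_eq_zero hf.self_of_nhds
  have hs : Tendsto (fun t => f' t / t) (nhdsWithin 0 {(0:ℝ)}ᶜ) (nhds a) := by
    have h := hasDerivAt_iff_tendsto_slope.mp hf'
    have heq : slope f' 0 = fun t => f' t / t := by
      funext t; simp [slope_def_field, h0]
    rwa [heq] at h
  have hneg : ∀ᶠ t in nhdsWithin 0 (Set.Ioi 0), f' t < 0 := by
    have h2 : ∀ᶠ t in nhdsWithin 0 {(0:ℝ)}ᶜ, f' t / t < a / 2 :=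
      hs.eventually (eventually_lt_nhds (by linarith))
    have h3 : ∀ᶠ t in nhdsWithin 0 (Set.Ioi 0), f' t / t < a / 2 :=
      h2.filter_mono (nhdsWithin_mono 0 (fun x hx => ne_of_gt hx))
    filter_upwards [h3, self_mem_nhdsWithin] with t ht ht0
    have ht0' : (0:ℝ) < t := ht0
    have := (div_lt_iff₀ ht0').mp ht
    nlinarith
  obtain ⟨uu, huu, hIoo⟩ := mem_nhdsGT_iff_exists_Ioo_subset.mp hneg
  have h4 := hf.and hmin
  obtain ⟨ε₂, hε₂, hball⟩ := Metric.eventually_nhds_iff_ball.mp h4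
  have huu0 : (0:ℝ) < uu := huu
  set r : ℝ := min (uu / 2) (ε₂ / 2) with hr_def
  have hr : 0 < r := lt_min (by linarith) (by linarith)
  have hrball : ∀ t ∈ Set.Icc (0:ℝ) r, t ∈ Metric.ball (0:ℝ) ε₂ := by
    intro t ht
    rw [Metric.mem_ball, Real.dist_eq, sub_zero, abs_of_nonneg ht.1]
    have : r ≤ ε₂ / 2 := min_le_right _ _
    linarith [ht.2]
  have hcont : ContinuousOn f (Set.Icc 0 r) := fun t ht =>
    ((hball t (hrball t ht)).1.continuousAt).continuousWithinAt
  have hanti : StrictAntiOn f (Set.Icc 0 r) := by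
    apply strictAntiOn_of_deriv_neg (convex_Icc 0 r) hcont
    intro t ht
    rw [interior_Icc] at ht
    have hdt : HasDerivAt f (f' t) t :=
      (hball t (hrball t ⟨le_of_lt ht.1, le_of_lt ht.2⟩)).1
    rw [hdt.deriv]
    exact hIoo ⟨ht.1, lt_of_lt_of_le ht.2 ((min_le_left _ _).trans (by linarith))⟩
  have h5 : f r < f 0 := hanti (Set.left_mem_Icc.mpr hr.le)
    (Set.right_mem_Icc.mpr hr.le) hr
  have h6 : f 0 ≤ f r := (hball r (hrball r (Set.right_mem_Icc.mpr hr.le))).2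
  linarith

lemma my_grad_contDiffOn {w : EuclideanSpace ℝ (Fin d) → ℝ} {U : Set (EuclideanSpace ℝ (Fin d))}
    (hU : IsOpen U) (hw : ContDiffOn ℝ 2 w U) : ContDiffOn ℝ 1 (gradient w) U := by
  have hw1 : ContDiffOn ℝ 1 (fderiv ℝ w) U := hw.fderiv_of_isOpen hU (by norm_num)
  have hlin : ContDiff ℝ 1 (fun L : (E →L[ℝ] ℝ) => (toDual ℝ E).symm L) :=
    (toDual ℝ E).symm.toContinuousLinearEquiv.toContinuousLinearMap.contDiff
  exact hlin.comp_contDiffOn hw1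

lemma my_inner_grad {w : EuclideanSpace ℝ (Fin d) → ℝ} (y u : EuclideanSpace ℝ (Fin d)) :
    (inner ℝ u (gradient w y) : ℝ) = fderiv ℝ w y u := by
  rw [real_inner_comm, gradient, toDual_symm_apply]

lemma my_hess_psd {w : EuclideanSpace ℝ (Fin d) → ℝ} {U : Set (EuclideanSpace ℝ (Fin d))}
    {x₀ : EuclideanSpace ℝ (Fin d)}
    (hU : IsOpen U) (hx : x₀ ∈ U) (hw : ContDiffOn ℝ 2 w U) (hmin : IsLocalMin w x₀)
    (u : EuclideanSpace ℝ (Fin d)) : 0 ≤ (inner ℝ u (hess w x₀ u) : ℝ) := by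
  have hg1 : ContDiffOn ℝ 1 (gradient w) U := my_grad_contDiffOn hU hw
  have hGdiff : DifferentiableAt ℝ (gradient w) x₀ :=
    (hg1.differentiableOn one_ne_zero).differentiableAt (hU.mem_nhds hx)
  set γ : ℝ → EuclideanSpace ℝ (Fin d) := fun t => x₀ + t • u with hγ_def
  have hγ0 : γ 0 = x₀ := by simp [hγ_def]
  have hγc : Continuous γ := by continuity
  have hγd : ∀ t : ℝ, HasDerivAt γ u t := by
    intro t
    simpa [hγ_def] using ((hasDerivAt_id t).smul_const u).const_add x₀
  have hUt : {t : ℝ | γ t ∈ U} ∈ nhds (0:ℝ) := by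
    have : IsOpen {t : ℝ | γ t ∈ U} := hU.preimage hγc
    exact this.mem_nhds (by simp [hγ0, hx])
  set f : ℝ → ℝ := fun t => w (γ t) with hf_def
  set f' : ℝ → ℝ := fun t => (inner ℝ u (gradient w (γ t)) : ℝ) with hf'_def
  have hf : ∀ᶠ t in nhds (0:ℝ), HasDerivAt f (f' t) t := by
    filter_upwards [hUt] with t ht
    have hwD : HasFDerivAt w (fderiv ℝ w (γ t)) (γ t) :=
      (((hw.differentiableOn (by norm_num)).differentiableAt
        (hU.mem_nhds ht)).hasFDerivAt)
    have h := hwD.comp_hasDerivAt t (hγd t)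
    show HasDerivAt f ((inner ℝ u (gradient w (γ t)) : ℝ)) t
    rw [my_inner_grad]
    exact h
  have hcomp : HasDerivAt (fun t => gradient w (γ t)) (hess w x₀ u) 0 := by
    have hG : HasFDerivAt (gradient w) (hess w x₀) (γ 0) := by
      rw [hγ0]; exact hGdiff.hasFDerivAt
    exact hG.comp_hasDerivAt 0 (hγd 0)
  have hf'D : HasDerivAt f' ((inner ℝ u (hess w x₀ u) : ℝ)) 0 := by
    have := (innerSL ℝ u).hasFDerivAt.comp_hasDerivAt 0 hcomp
    exact this
  have hminf : IsLocalMin f 0 := by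
    have : IsLocalMin w (γ 0) := by rwa [hγ0]
    exact this.comp_continuous hγc.continuousAt
  exact my_second_deriv_test hminf hf hf'D

lemma my_phi_hasFDerivAt (c : ℝ) (x : EuclideanSpace ℝ (Fin d)) :
    HasFDerivAt (fun y : EuclideanSpace ℝ (Fin d) => -(c/2) * (inner ℝ y y : ℝ))
      ((toDual ℝ E) ((-c) • x)) x := by
  have h1 := ((hasFDerivAt_id x).inner ℝ (hasFDerivAt_id x)).const_mul (-(c/2))
  refine h1.congr_fderiv ?_
  ext h
  simp only [fderivInnerCLM_apply, toDual_apply_apply, real_inner_smul_left,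
    ContinuousLinearMap.smul_apply, ContinuousLinearMap.coe_comp', Function.comp_apply,
    ContinuousLinearMap.prod_apply, ContinuousLinearMap.coe_id', id_eq, smul_eq_mul]
  rw [real_inner_comm h x]
  ring

lemma my_phi_gradient (c : ℝ) :
    gradient (fun y : EuclideanSpace ℝ (Fin d) => -(c/2) * (inner ℝ y y : ℝ)) =
      fun x => (-c) • x := by
  funext x
  rw [gradient, (my_phi_hasFDerivAt c x).fderiv, LinearIsometryEquiv.symm_apply_apply]

lemma my_phi_hess (c : ℝ) (x : EuclideanSpace ℝ (Fin d)) :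
    fderiv ℝ (gradient (fun y : EuclideanSpace ℝ (Fin d) => -(c/2) * (inner ℝ y y : ℝ))) x =
      (-c) • ContinuousLinearMap.id ℝ (EuclideanSpace ℝ (Fin d)) := by
  rw [my_phi_gradient c]
  exact ((hasFDerivAt_id x).const_smul (-c)).fderiv

lemma my_phi_contDiff (c : ℝ) :
    ContDiff ℝ 2 (fun y : EuclideanSpace ℝ (Fin d) => -(c/2) * (inner ℝ y y : ℝ)) :=
  contDiff_const.mul (contDiff_id.inner ℝ contDiff_id)

end Helpers

set_option maxHeartbeats 1000000 in
/-- (Proposition 2.3, blow-up of the ergodic constant as `β → 0⁺`). -/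
theorem stmt14 (d : ℕ) (hd : 2 ≤ d) (p : ℝ) (hp : 1 < p)
    (S : Set (EuclideanSpace ℝ (Fin d))) (hSo : IsOpen S) (hSb : Bornology.IsBounded S)
    (hSc : IsConnected S) (hSm : SmoothCollar S) (K : ℝ) (hK : 0 < K) :
    ∃ βbar : ℝ, 0 < βbar ∧
      ∀ β : ℝ, 0 < β → β < βbar →
        ∀ lam : ℝ, ∀ v : EuclideanSpace ℝ (Fin d) → ℝ,
          ContDiffOn ℝ 2 v S → (∀ x ∈ S, Qop p β v x = -lam) → BlowsUp S v →
          K ≤ lam := by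
  obtain ⟨R, hR1, hSR⟩ : ∃ R : ℝ, 1 ≤ R ∧ S ⊆ closedBall 0 R := by
    obtain ⟨R₀, hR₀⟩ := hSb.subset_closedBall 0
    exact ⟨max 1 R₀, le_max_left _ _,
      hR₀.trans (closedBall_subset_closedBall (le_max_right _ _))⟩
  have hp1 : (0:ℝ) < p - 1 := by linarith
  have hR0 : (0:ℝ) < R := by linarith
  refine ⟨1 / (4 * (p - 1) * K * R ^ 2), by positivity, ?_⟩
  intro β hβ0 hβbar lam v hv hQ hblow
  set c : ℝ := 2 * K with hc
  clear_value c
  have hc0 : 0 < c := by rw [hc]; positivity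
  set φ : EuclideanSpace ℝ (Fin d) → ℝ := fun y => -(c/2) * (inner ℝ y y : ℝ) with hφ
  clear_value φ
  set w : EuclideanSpace ℝ (Fin d) → ℝ := fun y => v y + φ y with hwdef
  clear_value w
  have hφCD : ContDiff ℝ 2 φ := by rw [hφ]; exact my_phi_contDiff c
  have hw2 : ContDiffOn ℝ 2 w S := by rw [hwdef]; exact hv.add hφCD.contDiffOn
  have hφlb : ∀ x ∈ S, -(c/2) * R^2 ≤ φ x := by
    intro x hx
    have hxR : ‖x‖ ≤ R := mem_closedBall_zero_iff.mp (hSR hx)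
    have h5 : ‖x‖^2 ≤ R^2 := by nlinarith [norm_nonneg x]
    have h6 : φ x = -(c/2) * ‖x‖^2 := by
      rw [hφ]
      simp only
      rw [real_inner_self_eq_norm_sq]
    rw [h6]
    have h7 := mul_nonneg hc0.le (by linarith : (0:ℝ) ≤ R^2 - ‖x‖^2)
    linarith
  obtain ⟨z₀, hz₀⟩ := hSc.nonempty
  have hfr : (frontier S).Nonempty := by
    by_contra hfe
    rw [Set.not_nonempty_iff_eq_empty] at hfe
    obtain ⟨δ, hδp, h⟩ := hblow (v z₀)
    have : bdist S z₀ < δ := by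
      rw [bdist, hfe]; simpa [Metric.infDist_empty] using hδp
    exact lt_irrefl _ (h z₀ hz₀ this)
  have hz₀pos : 0 < bdist S z₀ := by
    rw [bdist]
    refine (isClosed_frontier.notMem_iff_infDist_pos hfr).mp ?_
    intro hzf
    rw [hSo.frontier_eq] at hzf
    exact hzf.2 hz₀
  obtain ⟨δ, hδpos, hδ⟩ := hblow (w z₀ + c/2 * R^2 + 1)
  set δ' : ℝ := min δ (bdist S z₀) with hδ'
  have hδ'pos : 0 < δ' := lt_min hδpos hz₀pos
  have hδ'le : δ' ≤ δ := min_le_left _ _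
  have hδ'z : δ' ≤ bdist S z₀ := min_le_right _ _
  clear_value δ'
  set T : Set (EuclideanSpace ℝ (Fin d)) := {x ∈ closure S | δ' ≤ bdist S x} with hT
  clear_value T
  have hTsub : T ⊆ S := by
    intro x hx
    rw [hT] at hx
    by_contra hxS
    have hxf : x ∈ frontier S := by rw [hSo.frontier_eq]; exact ⟨hx.1, hxS⟩
    have h0 : bdist S x = 0 := Metric.infDist_zero_of_mem hxf
    have := hx.2
    rw [h0] at this
    linarith
  have hTc : IsCompact T := by
    have h1 : IsClosed T := by
      have hTeq : T = closure S ∩ (bdist S) ⁻¹' (Set.Ici δ') := by rw [hT]; rfl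
      rw [hTeq]
      exact isClosed_closure.inter (isClosed_Ici.preimage (Metric.continuous_infDist_pt _))
    refine Metric.isCompact_of_isClosed_isBounded h1 (hSb.closure.subset ?_)
    rw [hT]; exact fun x hx => hx.1
  have hz₀T : z₀ ∈ T := by rw [hT]; exact ⟨subset_closure hz₀, hδ'z⟩
  have hwc : ContinuousOn w T := (hw2.continuousOn).mono hTsub
  obtain ⟨x₀, hx₀T, hx₀min⟩ := hTc.exists_isMinOn ⟨z₀, hz₀T⟩ hwc
  have hx₀S : x₀ ∈ S := hTsub hx₀T
  have hglob : ∀ x ∈ S, w x₀ ≤ w x := by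
    intro x hx
    by_cases hxd : δ' ≤ bdist S x
    · refine isMinOn_iff.mp hx₀min x ?_
      rw [hT]; exact ⟨subset_closure hx, hxd⟩
    · push_neg at hxd
      have h1 : v x > w z₀ + c/2 * R^2 + 1 := hδ x hx (lt_of_lt_of_le hxd hδ'le)
      have h2 : w x₀ ≤ w z₀ := isMinOn_iff.mp hx₀min z₀ hz₀T
      have h3 := hφlb x hx
      have h4 : w x = v x + φ x := by rw [hwdef]
      linarith
  have hloc : IsLocalMin w x₀ :=
    Filter.eventually_of_mem (hSo.mem_nhds hx₀S) (fun x hx => hglob x hx)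
  have hvdiff : DifferentiableOn ℝ v S := hv.differentiableOn (by norm_num)
  have hgradw0 : gradient w x₀ = 0 := by
    rw [gradient, hloc.fderiv_eq_zero, map_zero]
  have hφgrad : gradient φ = fun x => (-c) • x := by rw [hφ]; exact my_phi_gradient c
  have hgradsum : ∀ y ∈ S, gradient w y = gradient v y + gradient φ y := by
    intro y hy
    rw [hwdef, gradient, gradient, gradient, ← map_add]
    congr 1
    exact fderiv_add (hvdiff.differentiableAt (hSo.mem_nhds hy))
      ((hφCD.differentiable (by norm_num)).differentiableAt)
  have hgval : gradient v x₀ = c • x₀ := by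
    have h1 := (hgradsum x₀ hx₀S).symm.trans hgradw0
    simp only [hφgrad] at h1
    have h2 : gradient v x₀ = -((-c) • x₀) := eq_neg_of_add_eq_zero_left h1
    rw [h2, neg_smul, neg_neg]
  set g : EuclideanSpace ℝ (Fin d) := gradient v x₀ with hg
  clear_value g
  have hGw : DifferentiableAt ℝ (gradient w) x₀ :=
    ((my_grad_contDiffOn hSo hw2).differentiableOn one_ne_zero).differentiableAt
      (hSo.mem_nhds hx₀S)
  have hφgdiff : DifferentiableAt ℝ (gradient φ) x₀ := by
    rw [hφgrad]
    exact (differentiable_id.const_smul (-c)).differentiableAt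
  have hHv : hess v x₀ = hess w x₀ + c • ContinuousLinearMap.id ℝ (EuclideanSpace ℝ (Fin d)) := by
    have hEv : gradient v =ᶠ[nhds x₀] (fun y => gradient w y - gradient φ y) := by
      filter_upwards [hSo.mem_nhds hx₀S] with y hy
      rw [hgradsum y hy]; abel
    rw [hess, hEv.fderiv_eq, fderiv_fun_sub hGw hφgdiff]
    have h1 : fderiv ℝ (gradient φ) x₀
        = (-c) • ContinuousLinearMap.id ℝ (EuclideanSpace ℝ (Fin d)) := by
      rw [hφ]; exact my_phi_hess c x₀
    have h2 : (-c) • ContinuousLinearMap.id ℝ (EuclideanSpace ℝ (Fin d))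
        = -(c • ContinuousLinearMap.id ℝ (EuclideanSpace ℝ (Fin d))) := by
      ext u; simp [neg_smul]
    rw [h1, h2, sub_neg_eq_add]
    rfl
  have hpsd : ∀ u, 0 ≤ (inner ℝ u (hess w x₀ u) : ℝ) :=
    fun u => my_hess_psd hSo hx₀S hw2 hloc u
  set t : ℝ := LinearMap.trace ℝ (EuclideanSpace ℝ (Fin d)) (hess w x₀).toLinearMap with htdef
  have ht0 : 0 ≤ t := by rw [htdef]; exact my_trace_nonneg _ hpsd
  set s : ℝ := ‖g‖^2 with hs
  set hI : ℝ := (inner ℝ g (hess w x₀ g) : ℝ) with hIdef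
  have hht : hI ≤ s * t := by
    rw [hIdef, hs, htdef]; exact my_inner_le_trace (by omega) _ hpsd g
  have hh0 : 0 ≤ hI := by rw [hIdef]; exact hpsd g
  clear_value t s hI
  have hs0 : 0 ≤ s := by rw [hs]; exact sq_nonneg _
  have hd' : (2:ℝ) ≤ (d:ℝ) := by exact_mod_cast hd
  have hsle : s ≤ c^2 * R^2 := by
    rw [hs, hgval, norm_smul]
    have hx₀R : ‖x₀‖ ≤ R := mem_closedBall_zero_iff.mp (hSR hx₀S)
    have habs : ‖c‖ = c := by rw [Real.norm_eq_abs, abs_of_pos hc0]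
    rw [habs]
    have h5 : ‖x₀‖^2 ≤ R^2 := by nlinarith [norm_nonneg x₀]
    nlinarith [mul_le_mul_of_nonneg_left h5 (sq_nonneg c)]
  have htrace : lap v x₀ = t + c * (d:ℝ) := by
    unfold lap
    rw [hHv]
    have hcoe : (hess w x₀ + c • ContinuousLinearMap.id ℝ (EuclideanSpace ℝ (Fin d))).toLinearMap
        = (hess w x₀).toLinearMap + c • LinearMap.id := by
      ext u; simp
    rw [hcoe, map_add, map_smul, LinearMap.trace_id, smul_eq_mul, finrank_euclideanSpace]
    rw [htdef]
    simp
  have hinner : (inner ℝ (hess v x₀ g) g : ℝ) = hI + c * s := by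
    rw [hHv]
    have happ : (hess w x₀ + c • ContinuousLinearMap.id ℝ (EuclideanSpace ℝ (Fin d))) g
        = hess w x₀ g + c • g := by simp
    rw [happ, inner_add_left, real_inner_smul_left, hIdef, hs,
      real_inner_comm g (hess w x₀ g), real_inner_self_eq_norm_sq]
  have hQx := hQ x₀ hx₀S
  rw [Qop] at hQx
  rw [← hg] at hQx
  rw [htrace, hinner, ← hs] at hQx
  set X : ℝ := (p - 2) * (hI + c * s) / (1 + s) with hX
  have h1s : (0:ℝ) < 1 + s := by linarith
  have hβK : β * (4 * (p-1) * K * R^2) < 1 := by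
    have hpos : 0 < 4 * (p-1) * K * R^2 := by positivity
    calc β * (4*(p-1)*K*R^2) < (1 / (4*(p-1)*K*R^2)) * (4*(p-1)*K*R^2) :=
          mul_lt_mul_of_pos_right hβbar hpos
      _ = 1 := by field_simp
  have hβs : β * (p-1) * s < K := by
    have h1 : β*(p-1)*s ≤ β*(p-1)*(c^2*R^2) :=
      mul_le_mul_of_nonneg_left hsle (by positivity)
    have h2 : β*(p-1)*(c^2*R^2) = K * (β * (4*(p-1)*K*R^2)) := by rw [hc]; ring
    have h3 : K * (β * (4*(p-1)*K*R^2)) < K * 1 := mul_lt_mul_of_pos_left hβK hK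
    linarith
  rcases le_or_gt 2 p with hp2 | hp2
  · have hX0 : 0 ≤ X := by
      rw [hX]
      apply div_nonneg _ h1s.le
      apply mul_nonneg (by linarith)
      nlinarith
    nlinarith [ht0, hβs, hX0, hQx, hd', hc0, hK, hc]
  · have hXlb : (p-2)*(t+c) ≤ X := by
      rw [hX, le_div_iff₀ h1s]
      nlinarith [mul_nonneg (by linarith : (0:ℝ) ≤ 2-p)
        (by linarith : (0:ℝ) ≤ t + c + s*t - hI)]
    nlinarith [ht0, hβs, hXlb, hQx, hd', hc0, hK, hp1, hc,
      mul_nonneg (by linarith : (0:ℝ) ≤ p-1) ht0,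
      mul_nonneg hc0.le (by linarith : (0:ℝ) ≤ (d:ℝ) + p - 3)]
end
end
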